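/- In the alternative-cycle graph ACG(π, τ, f), if for each 0 ≤ i ≤ n one adds a green edge joining r(x_i) and l(x_{i+1}), then the blue and green edges together form a single (blue–green alternating) path covering all nodes. -/

import Mathlib

open List

variable {α : Type*}

/-- A signed symbol: (name, orientation); `true` means positive. -/
abbrev SSym (α : Type*) := α × Bool

/-- Negation (orientation flip) of a signed symbol. -/
def symNeg (x : SSym α) : SSym α := (x.1, !x.2)

/-- Left node of an occurrence: a node `(a, true)` denotes the head `aʰ`,
and `(a, false)` denotes the tail `aᵗ`; a positive occurrence contributes
`(aʰ, aᵗ)`, a negative one `(aᵗ, aʰ)`. -/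
def lnode (x : SSym α) : SSym α := x

/-- Right node of an occurrence. -/
def rnode (x : SSym α) : SSym α := (x.1, !x.2)

/-- The unordered adjacency between two consecutive occurrences. -/
def adjOf (u v : SSym α) : Multiset (SSym α) := {rnode u, lnode v}

/-- The multiset of adjacencies of a chromosome. -/
def adjMS : List (SSym α) → Multiset (Multiset (SSym α))
  | u :: v :: rest => adjOf u v ::ₘ adjMS (v :: rest)
  | _ => 0

/-- Reversed and negated form of a segment. -/
def revneg (s : List (SSym α)) : List (SSym α) := (s.map symNeg).reverse

/-- One symmetric reversal: the reversed segment is flanked by a pair of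
inverted occurrences of the same repeat. -/
def SymRev (π π' : List (SSym α)) : Prop :=
  ∃ (p m q : List (SSym α)) (x : SSym α),
    π = p ++ x :: m ++ symNeg x :: q ∧
    π' = p ++ x :: revneg m ++ symNeg x :: q

/-- A symmetric reversal performed on the repeat `a`. -/
def SymRevOn (a : α) (π π' : List (SSym α)) : Prop :=
  ∃ (p m q : List (SSym α)) (x : SSym α), x.1 = a ∧
    π = p ++ x :: m ++ symNeg x :: q ∧
    π' = p ++ x :: revneg m ++ symNeg x :: q

/-- `π` can be transformed into `τ` by a series of symmetric reversals. -/
def Transformable (π τ : List (SSym α)) : Prop := Relation.ReflTransGen SymRev π τ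

/-- `π` can be transformed into `τ` by exactly `m` symmetric reversals. -/
def ChainRev : ℕ → List (SSym α) → List (SSym α) → Prop
  | 0, π, τ => π = τ
  | n + 1, π, τ => ∃ π', SymRev π π' ∧ ChainRev n π' τ

/-- A chromosome is flanked by `+r₀` and `-r₀`. -/
def IsChromosome (r₀ : α) (π : List (SSym α)) : Prop :=
  ∃ m : List (SSym α), π = (r₀, true) :: m ++ [(r₀, false)]

/-- Duplication number of symbol `a` in `π` (occurrences in both orientations). -/
def dpCount [DecidableEq α] (a : α) (π : List (SSym α)) : ℕ := (π.map Prod.fst).count a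

/-- Related chromosomes: identical duplication numbers for every gene/repeat. -/
def Related [DecidableEq α] (π τ : List (SSym α)) : Prop := ∀ a, dpCount a π = dpCount a τ

/-- A chromosome is simple if every adjacency appears only once. -/
def Simple [DecidableEq α] (π : List (SSym α)) : Prop := ∀ A, (adjMS π).count A ≤ 1

/-- Deletion of all occurrences of the repeat `b`. -/
def delSym [DecidableEq α] (b : α) (π : List (SSym α)) : List (SSym α) :=
  π.filter fun x => decide (x.1 ≠ b)

/-- The repeat `a` is neighbor-consistent: the two adjacencies flanking any of its
occurrences in `π` are matched to the two adjacencies flanking a single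
occurrence of `a` in `τ`. -/
def NeighborConsistent (π τ : List (SSym α)) (a : α) : Prop :=
  ∀ (p q : List (SSym α)) (u x v : SSym α),
    π = p ++ u :: x :: v :: q → x.1 = a →
    ∃ (p' q' : List (SSym α)) (u' y v' : SSym α),
      τ = p' ++ u' :: y :: v' :: q' ∧ y.1 = a ∧
      ({adjOf u x, adjOf x v} : Multiset (Multiset (SSym α))) =
        {adjOf u' y, adjOf y v'}

/-- The repeat `a` is black in `IG(π, τ)`: its two occurrences in `π`
have opposite signs. -/
def Black (π : List (SSym α)) (a : α) : Prop :=
  ∃ (p q r : List (SSym α)) (x y : SSym α),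
    π = p ++ x :: q ++ y :: r ∧ x.1 = a ∧ y.1 = a ∧ x.2 ≠ y.2

/-- The occurrence intervals of the repeats `a` and `b` interleave in `π`
(the adjacency relation of the intersection graph `IG(π, τ)`). -/
def Interleaves (π : List (SSym α)) (a b : α) : Prop :=
  a ≠ b ∧ ∃ (p q r s t : List (SSym α)) (x y x' y' : SSym α),
    x.1 = a ∧ x'.1 = a ∧ y.1 = b ∧ y'.1 = b ∧
    (π = p ++ x :: q ++ y :: r ++ x' :: s ++ y' :: t ∨
     π = p ++ y :: q ++ x :: r ++ y' :: s ++ x' :: t)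

/-- Two repeats are in the same connected component of the intersection graph. -/
def InSameComponent (π : List (SSym α)) : α → α → Prop :=
  Relation.ReflTransGen (Interleaves π)

/-- An abstract vertex-colored, vertex-weighted graph (intersection graph). -/
structure ColoredGraph (V : Type*) where
  adj : V → V → Prop
  black : V → Prop
  weight : V → ℕ

/-- The effect of performing a symmetric reversal on a black vertex `x`:
(rule-I) the colors of all neighbors of `x` are toggled; (rule-II) adjacency
among the neighbors of `x` is complemented; (rule-III) the weight of `x`
is decremented (and `x` is deleted when the weight reaches `0`). -/
def reverseAt {V : Type*} [DecidableEq V] (G : ColoredGraph V) (x : V) :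
    ColoredGraph V where
  adj u v := (G.adj x u ∧ G.adj x v ∧ ¬ G.adj u v ∧ u ≠ v) ∨
    (¬ (G.adj x u ∧ G.adj x v) ∧ G.adj u v)
  black v := (G.adj x v ∧ ¬ G.black v) ∨ (¬ G.adj x v ∧ G.black v)
  weight v := if v = x then G.weight v - 1 else G.weight v

/-- Reachability in a colored graph avoiding deleted (`dead`) vertices. -/
def Reach {V : Type*} (G : ColoredGraph V) (dead : V → Prop) : V → V → Prop :=
  Relation.ReflTransGen (fun u v => G.adj u v ∧ ¬ dead u ∧ ¬ dead v)

/-- The 2-balanced condition: any two occurrences of the same repeat in `τ`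
have opposite signs. -/
def BalancedTarget (τ : List (SSym α)) : Prop :=
  ∀ (p q r : List (SSym α)) (x y : SSym α),
    τ = p ++ x :: q ++ y :: r → x.1 = y.1 → x.2 ≠ y.2

/-- The adjacency `⟨u, v⟩` of `π` is positive: it is matched to an adjacency
`⟨y_j, y_{j+1}⟩` of `τ` with `r(u) = r(y_j)` and `l(v) = l(y_{j+1})`, i.e.
`τ` contains the consecutive pair `u v` literally. -/
def PosIn (τ : List (SSym α)) (u v : SSym α) : Prop :=
  ∃ p q : List (SSym α), τ = p ++ u :: v :: q

/-- The adjacency `⟨u, v⟩` of `π` is negative: `τ` contains its reversed and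
negated form. -/
def NegIn (τ : List (SSym α)) (u v : SSym α) : Prop := PosIn τ (symNeg v) (symNeg u)

/-- Positive and not entangled. -/
def StrictPos (τ : List (SSym α)) (u v : SSym α) : Prop := PosIn τ u v ∧ ¬ NegIn τ u v

/-- Negative and not entangled. -/
def StrictNeg (τ : List (SSym α)) (u v : SSym α) : Prop := NegIn τ u v ∧ ¬ PosIn τ u v

/-- An entangled adjacency can be read both positively and negatively. -/
def EntangledAdj (τ : List (SSym α)) (u v : SSym α) : Prop := PosIn τ u v ∧ NegIn τ u v

/-- The occurrence `x` (with left neighbor `w` and right neighbor `v`) is a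
boundary: its left and right adjacencies have distinct directions. -/
def IsBoundary (τ : List (SSym α)) (w x v : SSym α) : Prop :=
  (StrictPos τ w x ∧ StrictNeg τ x v) ∨ (StrictNeg τ w x ∧ StrictPos τ x v)

/-- The list of consecutive pairs (adjacencies) of a chromosome. -/
def pairsOf (π : List (SSym α)) : List (SSym α × SSym α) := π.zip π.tail

/-- A direction assignment (`true` = positive) compatible with the bijection
between the adjacencies of `π` and `τ`. -/
def DirOK (τ π : List (SSym α)) (d : List Bool) : Prop :=
  List.Forall₂ (fun (pr : SSym α × SSym α) (b : Bool) =>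
    (b = true → PosIn τ pr.1 pr.2) ∧ (b = false → NegIn τ pr.1 pr.2)) (pairsOf π) d

/-- Number of maximal `false`-runs (maximal negative segments). -/
def nMNSAux : Bool → List Bool → ℕ
  | _, [] => 0
  | prev, b :: rest => (if prev = true ∧ b = false then 1 else 0) + nMNSAux b rest

def nMNS (d : List Bool) : ℕ := nMNSAux true d

/-- `N_MNS[π]`: the number of maximal negative segments of `π` relative to `τ`
(entangled adjacencies assigned so that the number of MNS is minimized,
i.e. taking the common direction of their neighbors). -/
noncomputable def NMNS (π τ : List (SSym α)) : ℕ :=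
  sInf { n | ∃ d : List Bool, DirOK τ π d ∧ n = nMNS d }

/-- A node position of the alternative-cycle graph: `(i, false)` is the left
node of the `i`-th occurrence of `π`, `(i, true)` its right node. -/
abbrev NodePos := ℕ × Bool

/-- The value (as a node of the form `aʰ`/`aᵗ`) sitting at a node position. -/
def nodeVal (π : List (SSym α)) (p : NodePos) : Option (SSym α) :=
  (π[p.1]?).map fun x => if p.2 then rnode x else lnode x

/-- The adjacency of `π` between positions `i` and `i+1`, if any. -/
def adjAt (π : List (SSym α)) (i : ℕ) : Option (Multiset (SSym α)) :=
  match π[i]?, π[i+1]? with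
  | some u, some v => some (adjOf u v)
  | _, _ => none

/-- `f` is a bijection matching each adjacency of `τ` with an identical
adjacency of `π`. -/
def AdjBijection (π τ : List (SSym α)) (f : ℕ → ℕ) : Prop :=
  Set.BijOn f (Set.Iio (τ.length - 1)) (Set.Iio (π.length - 1)) ∧
  ∀ k < τ.length - 1, adjAt τ k = adjAt π (f k)

/-- The blue edge of `ACG(π, τ, f)` corresponding to the `k`-th occurrence of
`τ`: it joins the node of the `f`-image of the adjacency on the left of `y_k`
carrying the value `l(y_k)` with the node of the `f`-image of the adjacency on
the right of `y_k` carrying the value `r(y_k)`. -/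
def IsBlueEdge (π τ : List (SSym α)) (f : ℕ → ℕ) (k : ℕ) (e₁ e₂ : NodePos) : Prop :=
  ∃ y : SSym α, τ[k]? = some y ∧
    (if k = 0 then e₁ = (0, false)
     else (e₁ = (f (k-1), true) ∨ e₁ = (f (k-1) + 1, false)) ∧
       nodeVal π e₁ = some (lnode y)) ∧
    (if k = τ.length - 1 then e₂ = (π.length - 1, true)
     else (e₂ = (f k, true) ∨ e₂ = (f k + 1, false)) ∧
       nodeVal π e₂ = some (rnode y))

/-- A green edge joins `r(x_i)` and `l(x_{i+1})` (an adjacency of `π`). -/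
def GreenEdge (p q : NodePos) : Prop :=
  (p.2 = true ∧ q = (p.1 + 1, false)) ∨ (q.2 = true ∧ p = (q.1 + 1, false))

/-- A step along a blue or a green edge. -/
def BGStep (π τ : List (SSym α)) (f : ℕ → ℕ) (p q : NodePos) : Prop :=
  GreenEdge p q ∨ ∃ k, IsBlueEdge π τ f k p q ∨ IsBlueEdge π τ f k q p



/-- Auxiliary: equality of unordered pairs of multisets. -/
lemma pair_eq_pair' {X : Type*} {a b c d : X} (h : ({a, b} : Multiset X) = {c, d}) :
    (a = c ∧ b = d) ∨ (a = d ∧ b = c) := by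
  have h' : a ::ₘ {b} = c ::ₘ {d} := h
  rw [Multiset.cons_eq_cons] at h'
  rcases h' with ⟨h1, h2⟩ | ⟨hne, cs, h1, h2⟩
  · exact Or.inl ⟨h1, by simpa using h2⟩
  · have hcs : cs = 0 := by
      have := congrArg Multiset.card h1
      simp at this
      exact this
    subst hcs
    simp only [Multiset.cons_zero] at h1 h2
    exact Or.inr ⟨(Multiset.singleton_inj.mp h2).symm, Multiset.singleton_inj.mp h1⟩

/-- Auxiliary: the number of adjacencies of a list. -/
lemma adjMS_card : ∀ (l : List (SSym α)), Multiset.card (adjMS l) = l.length - 1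
  | [] => rfl
  | [_] => rfl
  | u :: v :: rest => by
    have ih := adjMS_card (v :: rest)
    simp only [adjMS, Multiset.card_cons, ih, List.length_cons]
    omega

/-- adding the green edges (adjacencies of `π`) to the blue
edges of `ACG(π, τ, f)` yields a single alternating path covering all nodes. -/
theorem blue_green_form_path [DecidableEq α] (r₀ : α)
    (π τ : List (SSym α)) (f : ℕ → ℕ)
    (hπ : IsChromosome r₀ π) (hτ : IsChromosome r₀ τ)
    (hrel : Related π τ) (hA : adjMS π = adjMS τ)
    (hf : AdjBijection π τ f) :
    ∃ L : List NodePos, L.Nodup ∧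
      (∀ p : NodePos, p ∈ L ↔ p.1 < π.length) ∧
      List.Chain' (BGStep π τ f) L := by
  classical
  obtain ⟨mp, hmp⟩ := hπ
  obtain ⟨mt, hmt⟩ := hτ
  obtain ⟨hbij, hmatch⟩ := hf
  have hπl : π.length = mp.length + 2 := by rw [hmp]; simp
  have hτl : τ.length = mt.length + 2 := by rw [hmt]; simp
  have hcard := congrArg Multiset.card hA
  rw [adjMS_card, adjMS_card] at hcard
  set n := π.length with hn
  have hn2 : 2 ≤ n := by omega
  have hlen : τ.length = n := by omega
  -- basic facts about f
  have hfk : ∀ k, k + 1 < n → f k + 1 < n := by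
    intro k hk
    have : f k ∈ Set.Iio (π.length - 1) := hbij.mapsTo (by simp [Set.mem_Iio]; omega)
    simp [Set.mem_Iio] at this
    omega
  have hsurj : ∀ i, i + 1 < n → ∃ k, k + 1 < n ∧ f k = i := by
    intro i hi
    have : i ∈ f '' Set.Iio (τ.length - 1) := hbij.surjOn (by simp [Set.mem_Iio]; omega)
    obtain ⟨k, hk, hfk'⟩ := this
    simp [Set.mem_Iio] at hk
    exact ⟨k, by omega, hfk'⟩
  -- the key choice of endpoints
  have hkey : ∀ k, ∃ c : Bool, k + 1 < n →
      Option.map rnode τ[k]? =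
        nodeVal π (if c then ((f k, true) : NodePos) else (f k + 1, false)) ∧
      Option.map lnode τ[k+1]? =
        nodeVal π (if c then ((f k + 1, false) : NodePos) else (f k, true)) := by
    intro k
    by_cases hk : k + 1 < n
    swap
    · exact ⟨true, fun h => absurd h hk⟩
    have hk1 : k < τ.length := by omega
    have hk2 : k + 1 < τ.length := by omega
    have hk3 : f k < π.length := by have := hfk k hk; omega
    have hk4 : f k + 1 < π.length := by have := hfk k hk; omega
    have hm := hmatch k (by omega)
    have hAτ : adjAt τ k = some (adjOf τ[k] τ[k+1]) := by
      unfold adjAt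
      rw [List.getElem?_eq_getElem hk1, List.getElem?_eq_getElem hk2]
    have hAπ : adjAt π (f k) = some (adjOf π[f k] π[f k+1]) := by
      unfold adjAt
      rw [List.getElem?_eq_getElem hk3, List.getElem?_eq_getElem hk4]
    rw [hAτ, hAπ, Option.some_inj] at hm
    have hm' := pair_eq_pair' hm
    rcases hm' with ⟨h1, h2⟩ | ⟨h1, h2⟩
    · refine ⟨true, fun _ => ⟨?_, ?_⟩⟩
      · simp [nodeVal, List.getElem?_eq_getElem hk1, List.getElem?_eq_getElem hk3, h1]
      · simp [nodeVal, List.getElem?_eq_getElem hk2, List.getElem?_eq_getElem hk4, h2]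
    · refine ⟨false, fun _ => ⟨?_, ?_⟩⟩
      · simp [nodeVal, List.getElem?_eq_getElem hk1, List.getElem?_eq_getElem hk4, h1]
      · simp [nodeVal, List.getElem?_eq_getElem hk2, List.getElem?_eq_getElem hk3, h2]
  choose c hc using hkey
  set E2 : ℕ → NodePos := fun k => if c k then (f k, true) else (f k + 1, false) with hE2def
  set E1 : ℕ → NodePos := fun k => if c k then (f k + 1, false) else (f k, true) with hE1def
  have hc2 : ∀ k, k + 1 < n → Option.map rnode τ[k]? = nodeVal π (E2 k) :=
    fun k h => (hc k h).1
  have hc1 : ∀ k, k + 1 < n → Option.map lnode τ[k+1]? = nodeVal π (E1 k) :=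
    fun k h => (hc k h).2
  have hE2form : ∀ k, E2 k = (f k, true) ∨ E2 k = (f k + 1, false) := by
    intro k; by_cases h : c k <;> simp [hE2def, h]
  have hE1form : ∀ k, E1 k = (f k, true) ∨ E1 k = (f k + 1, false) := by
    intro k; by_cases h : c k <;> simp [hE1def, h]
  have hgreen : ∀ k, GreenEdge (E2 k) (E1 k) := by
    intro k; by_cases h : c k
    · exact Or.inl (by simp [hE2def, hE1def, h, GreenEdge])
    · exact Or.inr (by simp [hE2def, hE1def, h, GreenEdge])
  -- blue edges
  have hblue0 : IsBlueEdge π τ f 0 (0, false) (E2 0) := by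
    refine ⟨τ[0]'(by omega), List.getElem?_eq_getElem (by omega), by simp, ?_⟩
    rw [if_neg (by omega)]
    refine ⟨hE2form 0, ?_⟩
    have := hc2 0 (by omega)
    rw [List.getElem?_eq_getElem (show 0 < τ.length by omega)] at this
    simpa using this.symm
  have hblueMid : ∀ k, k + 2 < n → IsBlueEdge π τ f (k+1) (E1 k) (E2 (k+1)) := by
    intro k hk
    refine ⟨τ[k+1]'(by omega), List.getElem?_eq_getElem (by omega), ?_, ?_⟩
    · rw [if_neg (by omega)]
      simp only [Nat.add_sub_cancel]
      refine ⟨hE1form k, ?_⟩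
      have := hc1 k (by omega)
      rw [List.getElem?_eq_getElem (show k + 1 < τ.length by omega)] at this
      simpa using this.symm
    · rw [if_neg (by omega)]
      refine ⟨hE2form (k+1), ?_⟩
      have := hc2 (k+1) (by omega)
      rw [List.getElem?_eq_getElem (show k + 1 < τ.length by omega)] at this
      simpa using this.symm
  have hblueLast : IsBlueEdge π τ f (n-1) (E1 (n-2)) (π.length - 1, true) := by
    refine ⟨τ[n-1]'(by omega), List.getElem?_eq_getElem (by omega), ?_, ?_⟩
    · rw [if_neg (by omega)]
      have hidx : n - 1 - 1 = n - 2 := by omega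
      rw [hidx]
      refine ⟨hE1form (n-2), ?_⟩
      have := hc1 (n-2) (by omega)
      have hidx2 : n - 2 + 1 = n - 1 := by omega
      rw [hidx2, List.getElem?_eq_getElem (show n - 1 < τ.length by omega)] at this
      simpa using this.symm
    · rw [if_pos (by omega)]
  -- the list
  set g : ℕ → NodePos := fun j =>
    if j = 0 then (0, false)
    else if j = 2*n - 1 then (n-1, true)
    else if j % 2 = 1 then E2 ((j-1)/2) else E1 (j/2 - 1) with hgdef
  set L : List NodePos := (List.range (2*n)).map g with hLdef
  have hg0 : g 0 = (0, false) := by simp [hgdef]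
  have hglast : g (2*n-1) = (n-1, true) := by
    have h1 : 2*n-1 ≠ 0 := by omega
    simp [hgdef, h1]
  have hgodd : ∀ k, k + 1 < n → g (2*k+1) = E2 k := by
    intro k hk
    simp only [hgdef]
    rw [if_neg (by omega), if_neg (by omega), if_pos (by omega)]
    congr 1
    omega
  have hgeven : ∀ k, k + 1 < n → g (2*k+2) = E1 k := by
    intro k hk
    simp only [hgdef]
    rw [if_neg (by omega), if_neg (by omega), if_neg (by omega)]
    congr 1
    omega
  have hmemb : ∀ p : NodePos, p.1 < n → p ∈ L := by
    rintro ⟨i, b⟩ hi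
    simp only [hLdef, List.mem_map, List.mem_range]
    cases b
    · by_cases hi0 : i = 0
      · exact ⟨0, by omega, by rw [hg0, hi0]⟩
      · obtain ⟨k, hk, hfk'⟩ := hsurj (i-1) (by omega)
        have hfi : f k + 1 = i := by omega
        by_cases hck : c k
        · refine ⟨2*k+2, by omega, ?_⟩
          rw [hgeven k hk, hE1def]
          simp [hck, hfi]
        · refine ⟨2*k+1, by omega, ?_⟩
          rw [hgodd k hk, hE2def]
          simp [hck, hfi]
    · by_cases hin : i = n - 1
      · exact ⟨2*n-1, by omega, by rw [hglast, hin]⟩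
      · obtain ⟨k, hk, hfk'⟩ := hsurj i (by omega)
        by_cases hck : c k
        · refine ⟨2*k+1, by omega, ?_⟩
          rw [hgodd k hk, hE2def]
          simp [hck, hfk']
        · refine ⟨2*k+2, by omega, ?_⟩
          rw [hgeven k hk, hE1def]
          simp [hck, hfk']
  have hfst : ∀ j, j < 2*n → (g j).1 < n := by
    intro j hj
    simp only [hgdef]
    split_ifs with h1 h2 h3
    · exact (by omega : (0:ℕ) < n)
    · exact (by omega : n - 1 < n)
    · have hb := hfk ((j-1)/2) (by omega)
      rcases hE2form ((j-1)/2) with h | h <;> rw [h]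
      · exact (by omega : f ((j-1)/2) < n)
      · exact (by omega : f ((j-1)/2) + 1 < n)
    · have hb := hfk (j/2 - 1) (by omega)
      rcases hE1form (j/2 - 1) with h | h <;> rw [h]
      · exact (by omega : f (j/2 - 1) < n)
      · exact (by omega : f (j/2 - 1) + 1 < n)
  refine ⟨L, ?_, ?_, ?_⟩
  · -- Nodup via cardinality
    have hLlen : L.length = 2*n := by simp [hLdef]
    have hsub : (Finset.range n ×ˢ (Finset.univ : Finset Bool)) ⊆ L.toFinset := by
      intro p hp
      rw [Finset.mem_product, Finset.mem_range] at hp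
      exact List.mem_toFinset.2 (hmemb p hp.1)
    have hScard : (Finset.range n ×ˢ (Finset.univ : Finset Bool)).card = 2*n := by
      simp [Finset.card_product]; omega
    have h1 : 2*n ≤ L.toFinset.card := hScard ▸ Finset.card_le_card hsub
    rw [List.card_toFinset] at h1
    have h2 : L.dedup.Sublist L := List.dedup_sublist L
    have h3 : L.dedup = L := h2.eq_of_length (by have := h2.length_le; omega)
    exact List.dedup_eq_self.mp h3
  · -- membership
    rintro ⟨i, b⟩
    constructor
    · intro hp
      simp only [hLdef, List.mem_map, List.mem_range] at hp
      obtain ⟨j, hj, hgj⟩ := hp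
      have := hfst j hj
      rw [hgj] at this
      exact this
    · exact fun h => hmemb (i, b) h
  · -- the chain
    rw [hLdef, List.Chain', List.isChain_map, show 2*n = (2*n - 1) + 1 by omega,
      List.isChain_range_succ]
    intro m hm
    by_cases hm0 : m = 0
    · subst hm0
      have e1 : Nat.succ 0 = 2*0+1 := by omega
      rw [hg0, e1, hgodd 0 (by omega)]
      exact Or.inr ⟨0, Or.inl hblue0⟩
    by_cases hmo : m % 2 = 1
    · obtain ⟨k, rfl⟩ : ∃ k, m = 2*k+1 := ⟨(m-1)/2, by omega⟩
      have hk : k + 1 < n := by omega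
      have e1 : Nat.succ (2*k+1) = 2*k+2 := by omega
      rw [hgodd k hk, e1, hgeven k hk]
      exact Or.inl (hgreen k)
    · obtain ⟨k, rfl⟩ : ∃ k, m = 2*k+2 := ⟨m/2 - 1, by omega⟩
      have hk : k + 1 < n := by omega
      rw [hgeven k hk]
      by_cases hkl : k = n - 2
      · have e1 : Nat.succ (2*k+2) = 2*n-1 := by omega
        rw [e1, hglast, hkl]
        refine Or.inr ⟨n-1, Or.inl ?_⟩
        have : ((n-1 : ℕ), true) = ((π.length - 1 : ℕ), true) := by rw [← hn]
        rw [this]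
        exact hblueLast
      · have hk2 : k + 2 < n := by omega
        have e1 : Nat.succ (2*k+2) = 2*(k+1)+1 := by omega
        rw [e1, hgodd (k+1) (by omega)]
        exact Or.inr ⟨k+1, Or.inl (hblueMid k hk2)⟩
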